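/- Let f : G → G' be a (Λ, κ)-quasi-isometry between finitely generated groups with word metrics, let C be a subgroup of G and C' a subgroup of G', and suppose the Hausdorff distance between f(C) and C' is finite. Then C is finitely generated if and only if C' is finitely generated. -/

import Mathlib

/-- The word length of `g` with respect to a finite generating set `S`. -/
noncomputable def wlen {G : Type*} [Group G] (S : Finset G) (g : G) : ℕ :=
  sInf {n | ∃ l : List G, l.length = n ∧ (∀ x ∈ l, x ∈ S ∨ x⁻¹ ∈ S) ∧ l.prod = g}

/-- The word metric on `G` with respect to `S`. -/
noncomputable def wdist {G : Type*} [Group G] (S : Finset G) (g h : G) : ℕ :=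
  wlen S (g⁻¹ * h)

section aux

variable {G : Type*} [Group G] (S : Finset G)

lemma exists_word_mem {U : Set G} {g : G} (hg : g ∈ Subgroup.closure U) :
    ∃ l : List G, (∀ x ∈ l, x ∈ U ∨ x⁻¹ ∈ U) ∧ l.prod = g := by
  induction hg using Subgroup.closure_induction with
  | mem x hx => exact ⟨[x], by simp [hx], by simp⟩
  | one => exact ⟨[], by simp, by simp⟩
  | mul a b _ _ iha ihb =>
    obtain ⟨la, hla, hpa⟩ := iha
    obtain ⟨lb, hlb, hpb⟩ := ihb
    refine ⟨la ++ lb, ?_, by simp [hpa, hpb]⟩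
    intro x hx
    rcases List.mem_append.mp hx with h | h
    exacts [hla x h, hlb x h]
  | inv a _ ih =>
    obtain ⟨l, hl, hp⟩ := ih
    refine ⟨(l.map fun x => x⁻¹).reverse, ?_, by rw [← List.prod_inv_reverse, hp]⟩
    intro x hx
    simp only [List.mem_reverse, List.mem_map] at hx
    obtain ⟨y, hy, rfl⟩ := hx
    rcases hl y hy with h | h
    · right; simpa using h
    · left; exact h

variable (hS : Subgroup.closure (S : Set G) = ⊤)
include hS

lemma exists_word (g : G) :
    ∃ l : List G, (∀ x ∈ l, (x : G) ∈ S ∨ x⁻¹ ∈ S) ∧ l.prod = g :=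
  exists_word_mem (hS ▸ Subgroup.mem_top g)

lemma wlen_spec (g : G) :
    ∃ l : List G, l.length = wlen S g ∧ (∀ x ∈ l, x ∈ S ∨ x⁻¹ ∈ S) ∧ l.prod = g := by
  obtain ⟨l, hl, hp⟩ := exists_word S hS g
  have hne : {n | ∃ l : List G, l.length = n ∧ (∀ x ∈ l, x ∈ S ∨ x⁻¹ ∈ S) ∧ l.prod = g}.Nonempty :=
    ⟨l.length, l, rfl, hl, hp⟩
  exact Nat.sInf_mem hne

omit hS in
lemma wlen_le {g : G} {l : List G} (hl : ∀ x ∈ l, x ∈ S ∨ x⁻¹ ∈ S)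
    (hp : l.prod = g) : wlen S g ≤ l.length :=
  Nat.sInf_le ⟨l, rfl, hl, hp⟩

omit hS in
lemma wlen_one : wlen S (1 : G) = 0 :=
  Nat.le_zero.mp (wlen_le S (l := []) (by simp) (by simp))

lemma wlen_eq_zero {g : G} (h : wlen S g = 0) : g = 1 := by
  obtain ⟨l, hlen, _, hp⟩ := wlen_spec S hS g
  rw [h, List.length_eq_zero_iff] at hlen
  simpa [hlen] using hp.symm

lemma wlen_mul (a b : G) : wlen S (a * b) ≤ wlen S a + wlen S b := by
  obtain ⟨la, hla, hca, hpa⟩ := wlen_spec S hS a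
  obtain ⟨lb, hlb, hcb, hpb⟩ := wlen_spec S hS b
  have := wlen_le S (l := la ++ lb) (g := a * b) ?_ (by simp [hpa, hpb])
  · simpa [hla, hlb] using this
  · intro x hx
    rcases List.mem_append.mp hx with h | h
    exacts [hca x h, hcb x h]

lemma wlen_inv_le (a : G) : wlen S a⁻¹ ≤ wlen S a := by
  obtain ⟨l, hl, hc, hp⟩ := wlen_spec S hS a
  have := wlen_le S (l := (l.map fun x => x⁻¹).reverse) (g := a⁻¹) ?_
    (by rw [← List.prod_inv_reverse, hp])
  · simpa [hl] using this
  · intro x hx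
    simp only [List.mem_reverse, List.mem_map] at hx
    obtain ⟨y, hy, rfl⟩ := hx
    rcases hc y hy with h | h
    · right; simpa using h
    · left; exact h

lemma wdist_symm (a b : G) : wdist S a b = wdist S b a := by
  have h1 := wlen_inv_le S hS (a⁻¹ * b)
  have h2 := wlen_inv_le S hS (b⁻¹ * a)
  simp only [mul_inv_rev, inv_inv] at h1 h2
  unfold wdist
  exact le_antisymm h2 h1

lemma wdist_triangle (a b c : G) : wdist S a c ≤ wdist S a b + wdist S b c := by
  have : a⁻¹ * c = (a⁻¹ * b) * (b⁻¹ * c) := by group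
  simpa only [wdist, this] using wlen_mul S hS (a⁻¹ * b) (b⁻¹ * c)

omit hS in
lemma wdist_one_left (g : G) : wdist S 1 g = wlen S g := by simp [wdist]

omit hS in
lemma wdist_mul_right (a t : G) : wdist S a (a * t) = wlen S t := by
  simp [wdist, mul_assoc]

lemma ball_finite (n : ℕ) : {g : G | wlen S g ≤ n}.Finite := by
  classical
  set T : Finset G := S ∪ S.image (fun x => x⁻¹) with hT
  have : {g : G | wlen S g ≤ n} ⊆
      (fun l : List {x // x ∈ T} => (l.map Subtype.val).prod) ''
        {l | l.length ≤ n} := by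
    intro g hg
    simp only [Set.mem_setOf_eq] at hg
    obtain ⟨l, hlen, hc, hp⟩ := wlen_spec S hS g
    have hmem : ∀ x ∈ l, x ∈ T := by
      intro x hx
      rcases hc x hx with h | h
      · exact Finset.mem_union_left _ h
      · exact Finset.mem_union_right _ (Finset.mem_image.mpr ⟨x⁻¹, h, by simp⟩)
    refine ⟨l.attach.map (fun y => ⟨y.1, hmem y.1 y.2⟩), ?_, ?_⟩
    · simp only [Set.mem_setOf_eq, List.length_map, List.length_attach]
      omega
    · simp only [List.map_map]
      rw [show ((fun x : {x // x ∈ T} => x.1) ∘ fun y : {x // x ∈ l} => (⟨y.1, hmem y.1 y.2⟩ : {x // x ∈ T})) = fun y : {x // x ∈ l} => y.1 from rfl]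
      rw [List.attach_map_subtype_val]
      exact hp
  exact Set.Finite.subset (Set.Finite.image _ (List.finite_length_le _ n)) this

lemma fg_of_ball (C : Subgroup G) (B : ℝ)
    (h : ∀ c ∈ C, c ∈ Subgroup.closure {x : G | x ∈ C ∧ (wlen S x : ℝ) ≤ B}) :
    C.FG := by
  rw [Subgroup.fg_iff]
  refine ⟨{x : G | x ∈ C ∧ (wlen S x : ℝ) ≤ B}, ?_, ?_⟩
  · apply le_antisymm
    · rw [Subgroup.closure_le]
      intro x hx
      exact hx.1
    · intro c hc
      exact h c hc
  · apply Set.Finite.subset (ball_finite S hS ⌈B⌉₊)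
    intro x hx
    have : (wlen S x : ℝ) ≤ (⌈B⌉₊ : ℝ) := le_trans hx.2 (Nat.le_ceil B)
    exact_mod_cast this

end aux
/-- If `f : G → G'` is a `(Λ, κ)`-quasi-isometry between finitely generated groups
(with word metrics), `C ≤ G`, `C' ≤ G'`, and the Hausdorff distance between `f(C)`
and `C'` is finite, then `C` is finitely generated iff `C'` is. -/
theorem stmt_13 {G G' : Type*} [Group G] [Group G']
    (S : Finset G) (hS : Subgroup.closure (S : Set G) = ⊤)
    (S' : Finset G') (hS' : Subgroup.closure (S' : Set G') = ⊤)
    (f : G → G') (Λ κ : ℝ) (hΛ : 1 ≤ Λ) (hκ : 0 ≤ κ)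
    (hqi : ∀ x₁ x₂ : G,
      (wdist S x₁ x₂ : ℝ) / Λ - κ ≤ (wdist S' (f x₁) (f x₂) : ℝ) ∧
      (wdist S' (f x₁) (f x₂) : ℝ) ≤ Λ * (wdist S x₁ x₂ : ℝ) + κ)
    (honto : ∀ y : G', ∃ x : G, (wdist S' y (f x) : ℝ) ≤ κ)
    (C : Subgroup G) (C' : Subgroup G')
    (hHaus : ∃ M : ℕ,
      (∀ c ∈ C, ∃ c' ∈ C', wdist S' (f c) c' ≤ M) ∧
      (∀ c' ∈ C', ∃ c ∈ C, wdist S' (f c) c' ≤ M)) :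
    C.FG ↔ C'.FG := by
  classical
  obtain ⟨M, hM1, hM2⟩ := hHaus
  have hM0 : (0:ℝ) ≤ (M : ℝ) := Nat.cast_nonneg M
  have hΛ0 : (0:ℝ) < Λ := lt_of_lt_of_le one_pos hΛ
  have hK0 : (0:ℝ) ≤ (wlen S' (f 1) : ℝ) := Nat.cast_nonneg _
  constructor
  · -- C.FG → C'.FG
    intro hC
    obtain ⟨T, hTclos, hTfin⟩ := (Subgroup.fg_iff C).mp hC
    set A : ℕ := hTfin.toFinset.sup (wlen S) with hA
    have hTC : T ⊆ (C : Set G) := hTclos ▸ Subgroup.subset_closure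
    have hwlenA : ∀ t : G, (t ∈ T ∨ t⁻¹ ∈ T) → wlen S t ≤ A := by
      intro t ht
      rcases ht with h | h
      · exact Finset.le_sup (hTfin.mem_toFinset.mpr h)
      · calc wlen S t = wlen S (t⁻¹)⁻¹ := by rw [inv_inv]
          _ ≤ wlen S t⁻¹ := wlen_inv_le S hS _
          _ ≤ A := Finset.le_sup (hTfin.mem_toFinset.mpr h)
    set B : ℝ := (wlen S' (f 1) : ℝ) + Λ * A + κ + 2 * M with hB
    have hΛA : (0:ℝ) ≤ Λ * A := by positivity
    apply fg_of_ball S' hS' C' B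
    intro d₀' hd₀'
    have key : ∀ l : List G, (∀ x ∈ l, x ∈ T ∨ x⁻¹ ∈ T) →
        ∀ d' ∈ C', (wdist S' (f l.prod) d' : ℝ) ≤ M →
        d' ∈ Subgroup.closure {x : G' | x ∈ C' ∧ (wlen S' x : ℝ) ≤ B} := by
      intro l
      induction l using List.reverseRecOn with
      | nil =>
        intro _ d' hd' hdist
        apply Subgroup.subset_closure
        refine ⟨hd', ?_⟩
        simp only [List.prod_nil] at hdist
        have h1 : wlen S' d' ≤ wlen S' (f 1) + wdist S' (f 1) d' := by
          have := wdist_triangle S' hS' 1 (f 1) d'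
          simpa [wdist_one_left] using this
        have h1' : (wlen S' d' : ℝ) ≤ (wlen S' (f 1) : ℝ) + (wdist S' (f 1) d' : ℝ) := by
          exact_mod_cast h1
        rw [hB]; linarith
      | append_singleton l t ih =>
        intro hcond d' hd' hdist
        have hlcond : ∀ x ∈ l, x ∈ T ∨ x⁻¹ ∈ T :=
          fun x hx => hcond x (List.mem_append.mpr (Or.inl hx))
        have htT : t ∈ T ∨ t⁻¹ ∈ T := hcond t (by simp)
        have hlC : l.prod ∈ C := by
          apply list_prod_mem
          intro x hx
          rcases hlcond x hx with h | h
          · exact hTC h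
          · have : x⁻¹ ∈ C := hTC h
            simpa using C.inv_mem this
        obtain ⟨c₁', hc₁'C, hc₁'⟩ := hM1 l.prod hlC
        have hIH := ih hlcond c₁' hc₁'C (by exact_mod_cast hc₁')
        have hxmem : c₁'⁻¹ * d' ∈ C' := mul_mem (inv_mem hc₁'C) hd'
        have tri1 : wdist S' c₁' d' ≤ wdist S' c₁' (f l.prod) + wdist S' (f l.prod) d' :=
          wdist_triangle S' hS' _ _ _
        have tri2 : wdist S' (f l.prod) d' ≤
            wdist S' (f l.prod) (f (l ++ [t]).prod) + wdist S' (f (l ++ [t]).prod) d' :=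
          wdist_triangle S' hS' _ _ _
        have hub := (hqi l.prod (l ++ [t]).prod).2
        have hdd : wdist S l.prod (l ++ [t]).prod ≤ A := by
          have hpe : (l ++ [t]).prod = l.prod * t := by simp
          rw [hpe, wdist_mul_right]
          exact hwlenA t htT
        have hdd' : (wdist S l.prod (l ++ [t]).prod : ℝ) ≤ (A : ℝ) := by exact_mod_cast hdd
        have hmul : Λ * (wdist S l.prod (l ++ [t]).prod : ℝ) ≤ Λ * A :=
          mul_le_mul_of_nonneg_left hdd' hΛ0.le
        have hsymm : wdist S' c₁' (f l.prod) = wdist S' (f l.prod) c₁' := wdist_symm S' hS' _ _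
        have hc₁'' : (wdist S' c₁' (f l.prod) : ℝ) ≤ M := by
          rw [hsymm]; exact_mod_cast hc₁'
        have tri1' : (wdist S' c₁' d' : ℝ) ≤
            (wdist S' c₁' (f l.prod) : ℝ) + (wdist S' (f l.prod) d' : ℝ) := by exact_mod_cast tri1
        have tri2' : (wdist S' (f l.prod) d' : ℝ) ≤
            (wdist S' (f l.prod) (f (l ++ [t]).prod) : ℝ) +
              (wdist S' (f (l ++ [t]).prod) d' : ℝ) := by exact_mod_cast tri2
        have hxlen : (wlen S' (c₁'⁻¹ * d') : ℝ) ≤ B := by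
          have e : wlen S' (c₁'⁻¹ * d') = wdist S' c₁' d' := rfl
          rw [e, hB]; linarith
        have hd'eq : d' = c₁' * (c₁'⁻¹ * d') := by group
        rw [hd'eq]
        exact mul_mem hIH (Subgroup.subset_closure ⟨hxmem, hxlen⟩)
    obtain ⟨c, hcC, hcd⟩ := hM2 d₀' hd₀'
    obtain ⟨l, hl, hp⟩ := exists_word_mem (hTclos ▸ hcC : c ∈ Subgroup.closure T)
    exact key l hl d₀' hd₀' (by rw [hp]; exact_mod_cast hcd)
  · -- C'.FG → C.FG
    intro hC'
    obtain ⟨T', hT'clos, hT'fin⟩ := (Subgroup.fg_iff C').mp hC'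
    set A' : ℕ := hT'fin.toFinset.sup (wlen S') with hA'
    have hT'C' : T' ⊆ (C' : Set G') := hT'clos ▸ Subgroup.subset_closure
    have hA'0 : (0:ℝ) ≤ (A' : ℝ) := Nat.cast_nonneg _
    have hwlenA' : ∀ t : G', (t ∈ T' ∨ t⁻¹ ∈ T') → wlen S' t ≤ A' := by
      intro t ht
      rcases ht with h | h
      · exact Finset.le_sup (hT'fin.mem_toFinset.mpr h)
      · calc wlen S' t = wlen S' (t⁻¹)⁻¹ := by rw [inv_inv]
          _ ≤ wlen S' t⁻¹ := wlen_inv_le S' hS' _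
          _ ≤ A' := Finset.le_sup (hT'fin.mem_toFinset.mpr h)
    set B₂ : ℝ := Λ * ((wlen S' (f 1) : ℝ) + 2 * M + A' + κ) with hB₂
    apply fg_of_ball S hS C B₂
    intro c₀ hc₀
    have key : ∀ l : List G', (∀ x ∈ l, x ∈ T' ∨ x⁻¹ ∈ T') →
        ∀ c ∈ C, (wdist S' (f c) l.prod : ℝ) ≤ M →
        c ∈ Subgroup.closure {x : G | x ∈ C ∧ (wlen S x : ℝ) ≤ B₂} := by
      intro l
      induction l using List.reverseRecOn with
      | nil =>
        intro _ c hc hdist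
        apply Subgroup.subset_closure
        refine ⟨hc, ?_⟩
        simp only [List.prod_nil] at hdist
        have hlow := (hqi 1 c).1
        have h1 : wdist S' (f 1) (f c) ≤ wdist S' (f 1) 1 + wdist S' 1 (f c) :=
          wdist_triangle S' hS' _ _ _
        have h2 : wdist S' (f 1) 1 = wlen S' (f 1) := by
          rw [wdist_symm S' hS', wdist_one_left]
        have h3 : wdist S' 1 (f c) = wdist S' (f c) 1 := wdist_symm S' hS' _ _
        rw [h2, h3] at h1
        have h1' : (wdist S' (f 1) (f c) : ℝ) ≤ (wlen S' (f 1) : ℝ) + (wdist S' (f c) 1 : ℝ) := by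
          exact_mod_cast h1
        have hup : (wdist S 1 c : ℝ) ≤ ((wdist S' (f 1) (f c) : ℝ) + κ) * Λ := by
          rw [← div_le_iff₀ hΛ0]; linarith
        have hlen : (wlen S c : ℝ) = (wdist S 1 c : ℝ) := by rw [wdist_one_left]
        rw [hlen, hB₂]
        have hfin : ((wdist S' (f 1) (f c) : ℝ) + κ) * Λ ≤
            Λ * ((wlen S' (f 1) : ℝ) + 2 * M + A' + κ) := by
          rw [mul_comm]
          apply mul_le_mul_of_nonneg_left _ hΛ0.le
          linarith
        linarith
      | append_singleton l t ih =>
        intro hcond c hc hdist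
        have hlcond : ∀ x ∈ l, x ∈ T' ∨ x⁻¹ ∈ T' :=
          fun x hx => hcond x (List.mem_append.mpr (Or.inl hx))
        have htT : t ∈ T' ∨ t⁻¹ ∈ T' := hcond t (by simp)
        have hlC' : l.prod ∈ C' := by
          apply list_prod_mem
          intro x hx
          rcases hlcond x hx with h | h
          · exact hT'C' h
          · have : x⁻¹ ∈ C' := hT'C' h
            simpa using C'.inv_mem this
        obtain ⟨c₁, hc₁C, hc₁⟩ := hM2 l.prod hlC'
        have hIH := ih hlcond c₁ hc₁C (by exact_mod_cast hc₁)
        have hxmem : c₁⁻¹ * c ∈ C := mul_mem (inv_mem hc₁C) hc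
        have tri1 : wdist S' (f c₁) (f c) ≤
            wdist S' (f c₁) l.prod + wdist S' l.prod (f c) := wdist_triangle S' hS' _ _ _
        have tri2 : wdist S' l.prod (f c) ≤
            wdist S' l.prod (l ++ [t]).prod + wdist S' (l ++ [t]).prod (f c) :=
          wdist_triangle S' hS' _ _ _
        have hstep : wdist S' l.prod (l ++ [t]).prod ≤ A' := by
          have hpe : (l ++ [t]).prod = l.prod * t := by simp
          rw [hpe, wdist_mul_right]
          exact hwlenA' t htT
        have hlast : wdist S' (l ++ [t]).prod (f c) = wdist S' (f c) (l ++ [t]).prod :=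
          wdist_symm S' hS' _ _
        have hsum : (wdist S' (f c₁) (f c) : ℝ) ≤ (M : ℝ) + (A' : ℝ) + (M : ℝ) := by
          have tri1' : (wdist S' (f c₁) (f c) : ℝ) ≤
              (wdist S' (f c₁) l.prod : ℝ) + (wdist S' l.prod (f c) : ℝ) := by exact_mod_cast tri1
          have tri2' : (wdist S' l.prod (f c) : ℝ) ≤
              (wdist S' l.prod (l ++ [t]).prod : ℝ) + (wdist S' (l ++ [t]).prod (f c) : ℝ) := by
            exact_mod_cast tri2
          have hstep' : (wdist S' l.prod (l ++ [t]).prod : ℝ) ≤ (A' : ℝ) := by exact_mod_cast hstep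
          have hlast' : (wdist S' (l ++ [t]).prod (f c) : ℝ) ≤ (M : ℝ) := by
            rw [hlast]; exact hdist
          have hc₁' : (wdist S' (f c₁) l.prod : ℝ) ≤ (M : ℝ) := by exact_mod_cast hc₁
          linarith
        have hlow := (hqi c₁ c).1
        have hup : (wdist S c₁ c : ℝ) ≤ ((wdist S' (f c₁) (f c) : ℝ) + κ) * Λ := by
          rw [← div_le_iff₀ hΛ0]; linarith
        have hxlen : (wlen S (c₁⁻¹ * c) : ℝ) ≤ B₂ := by
          have e : wlen S (c₁⁻¹ * c) = wdist S c₁ c := rfl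
          rw [e, hB₂]
          have hfin : ((wdist S' (f c₁) (f c) : ℝ) + κ) * Λ ≤
              Λ * ((wlen S' (f 1) : ℝ) + 2 * M + A' + κ) := by
            rw [mul_comm]
            apply mul_le_mul_of_nonneg_left _ hΛ0.le
            linarith
          linarith
        have hceq : c = c₁ * (c₁⁻¹ * c) := by group
        rw [hceq]
        exact mul_mem hIH (Subgroup.subset_closure ⟨hxmem, hxlen⟩)
    obtain ⟨d', hd'C', hcd⟩ := hM1 c₀ hc₀
    obtain ⟨l, hl, hp⟩ := exists_word_mem (hT'clos ▸ hd'C' : d' ∈ Subgroup.closure T')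
    exact key l hl c₀ hc₀ (by rw [hp]; exact_mod_cast hcd)
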